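/- For every integer g ≥ 1, the quantity (12g−6)·m1(g) is a positive integer, where m1(g) = 2·(6g−5)!/(12^g·g!·(3g−3)!). -/

import Mathlib

/-- The mass of oriented maximal Wicks forms of genus `g`. -/
def m1 (g : ℕ) : ℚ :=
  2 * (Nat.factorial (6 * g - 5)) / (12 ^ g * Nat.factorial g * Nat.factorial (3 * g - 3))

/-- Auxiliary product `∏_{j<k} (6j+1)(6j+5)`. -/
def wicksP : ℕ → ℕ
  | 0 => 1
  | (k+1) => wicksP k * ((6 * k + 1) * (6 * k + 5))

lemma wicksP_pos (k : ℕ) : 0 < wicksP k := by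
  induction k with
  | zero => simp [wicksP]
  | succ k ih => simp only [wicksP]; positivity

/-- The closed-form natural number equal to `(12(k+1)-6) * m1 (k+1)`. -/
def wicksN (k : ℕ) : ℕ := Nat.choose (2 * k + 1) k * (6 * k + 1) * wicksP k

lemma wicksN_pos (k : ℕ) : 0 < wicksN k := by
  have h1 : 0 < Nat.choose (2 * k + 1) k := Nat.choose_pos (by omega)
  have h2 := wicksP_pos k
  unfold wicksN
  positivity

lemma fact6 (n : ℕ) : Nat.factorial (n + 6) =
    (n+6) * (n+5) * (n+4) * (n+3) * (n+2) * (n+1) * Nat.factorial n := by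
  rw [show n + 6 = (n+5) + 1 from rfl, Nat.factorial_succ,
      show n + 5 = (n+4) + 1 from rfl, Nat.factorial_succ,
      show n + 4 = (n+3) + 1 from rfl, Nat.factorial_succ,
      show n + 3 = (n+2) + 1 from rfl, Nat.factorial_succ,
      show n + 2 = (n+1) + 1 from rfl, Nat.factorial_succ,
      Nat.factorial_succ]
  ring

lemma fact3 (n : ℕ) : Nat.factorial (n + 3) =
    (n+3) * (n+2) * (n+1) * Nat.factorial n := by
  rw [show n + 3 = (n+2) + 1 from rfl, Nat.factorial_succ,
      show n + 2 = (n+1) + 1 from rfl, Nat.factorial_succ,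
      Nat.factorial_succ]
  ring

lemma choose_step (k : ℕ) :
    Nat.choose (2 * (k+1) + 1) (k+1) * (k + 2) =
      2 * (2 * k + 3) * Nat.choose (2 * k + 1) k := by
  have hs1 : Nat.choose (2 * k + 3) (k + 2) = Nat.choose (2 * k + 3) (k + 1) := by
    rw [← Nat.choose_symm (by omega : k + 2 ≤ 2 * k + 3)]
    congr 1
    omega
  have h1 : (2 * k + 3) * Nat.choose (2 * k + 2) (k + 1) =
      Nat.choose (2 * k + 3) (k + 1) * (k + 2) := by
    have := Nat.add_one_mul_choose_eq (2 * k + 2) (k + 1)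
    simpa [Nat.succ_eq_add_one, show 2 * k + 2 + 1 = 2 * k + 3 by ring, hs1] using this
  have hs2 : Nat.choose (2 * k + 1) (k + 1) = Nat.choose (2 * k + 1) k := by
    rw [← Nat.choose_symm (by omega : k + 1 ≤ 2 * k + 1)]
    congr 1
    omega
  have h2 : Nat.choose (2 * k + 2) (k + 1) = 2 * Nat.choose (2 * k + 1) k := by
    rw [show 2 * k + 2 = (2 * k + 1) + 1 from rfl, Nat.choose_succ_succ, hs2]
    ring
  have h3 : 2 * (k + 1) + 1 = 2 * k + 3 := by omega
  rw [h3, ← h1, h2]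
  ring

lemma key (k : ℕ) : ((12 * k + 6 : ℕ) : ℚ) * m1 (k + 1) = wicksN k := by
  induction k with
  | zero =>
    norm_num [m1, wicksN, wicksP, Nat.factorial]
  | succ k ih =>
    have hm1 : m1 (k + 1) =
        2 * (Nat.factorial (6 * k + 1)) /
          (12 ^ (k+1) * Nat.factorial (k+1) * Nat.factorial (3 * k)) := by
      unfold m1
      rw [show 6 * (k+1) - 5 = 6 * k + 1 by omega, show 3 * (k+1) - 3 = 3 * k by omega]
    have hm2 : m1 (k + 1 + 1) =
        2 * (Nat.factorial (6 * k + 7)) /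
          (12 ^ (k+2) * Nat.factorial (k+2) * Nat.factorial (3 * k + 3)) := by
      unfold m1
      rw [show 6 * (k+1+1) - 5 = 6 * k + 7 by omega,
          show 3 * (k+1+1) - 3 = 3 * k + 3 by omega,
          show k + 1 + 1 = k + 2 from rfl]
    rw [hm1] at ih
    rw [hm2]
    have hcs : (Nat.choose (2*(k+1)+1) (k+1) : ℚ) * ((k:ℚ)+2) =
        2 * (2*(k:ℚ)+3) * (Nat.choose (2*k+1) k : ℚ) := by
      exact_mod_cast choose_step k
    -- cast facts
    have hA : (Nat.factorial (6 * k + 7) : ℚ) =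
        (6*(k:ℚ)+7) * (6*k+6) * (6*k+5) * (6*k+4) * (6*k+3) * (6*k+2) *
          (Nat.factorial (6 * k + 1) : ℚ) := by
      have := fact6 (6 * k + 1)
      rw [show 6 * k + 1 + 6 = 6 * k + 7 by omega] at this
      rw [this]
      push_cast
      ring
    have hD : (Nat.factorial (3 * k + 3) : ℚ) =
        (3*(k:ℚ)+3) * (3*k+2) * (3*k+1) * (Nat.factorial (3 * k) : ℚ) := by
      have := fact3 (3 * k)
      rw [this]
      push_cast
      ring
    have hC : (Nat.factorial (k + 2) : ℚ) = ((k:ℚ)+2) * (Nat.factorial (k+1) : ℚ) := by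
      rw [show k + 2 = (k+1)+1 from rfl, Nat.factorial_succ]
      push_cast
      ring
    have hB : (12:ℚ) ^ (k+2) = 12 * 12 ^ (k+1) := by
      rw [pow_succ]
      ring
    have hBne : (12:ℚ) ^ (k+1) ≠ 0 := by positivity
    have hCne : ((Nat.factorial (k+1) : ℚ)) ≠ 0 := by
      exact_mod_cast Nat.factorial_ne_zero (k+1)
    have hDne : ((Nat.factorial (3*k) : ℚ)) ≠ 0 := by
      exact_mod_cast Nat.factorial_ne_zero (3*k)
    simp only [wicksN, wicksP] at ih ⊢
    push_cast at ih hcs ⊢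
    rw [hA, hD, hC, hB]
    field_simp at ih ⊢
    linear_combination (3*(12*(k:ℚ)+18)*(6*k+7)*(6*k+4)*(6*k+2)) * ih +
      (-36*(3*(k:ℚ)+2)*(3*k+1)*(6*k+7)*(6*k+1)*(wicksP k : ℚ) *
        (12^(k+1)) * (Nat.factorial (k+1) : ℚ) * (Nat.factorial (3*k) : ℚ)) * hcs

theorem pointed_count_is_integer (g : ℕ) (hg : 1 ≤ g) :
    ∃ n : ℕ, 0 < n ∧ ((12 * g - 6 : ℕ) : ℚ) * m1 g = n := by
  obtain ⟨k, rfl⟩ : ∃ k, g = k + 1 := ⟨g - 1, by omega⟩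
  refine ⟨wicksN k, wicksN_pos k, ?_⟩
  have := key k
  rw [show 12 * (k + 1) - 6 = 12 * k + 6 by omega]
  exact this
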